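/- arXiv:math/0607309 — 6 statements merged into one kernel-verified Lean document; each statement's English description precedes it below -/
import Mathlib

section
/- For real numbers 0 < x < y, the function β ↦ Γ(x+β)/Γ(y+β) is strictly decreasing on (0,∞). -/
open MeasureTheory intervalIntegral Set

/-- The complex beta integral of real arguments is the (coerced) real beta integral. -/
lemma betaIntegral_ofReal (a b : ℝ) :
    Complex.betaIntegral (a : ℂ) (b : ℂ) =
      ((∫ t in (0:ℝ)..1, t ^ (a - 1) * (1 - t) ^ (b - 1) : ℝ) : ℂ) := by
  rw [Complex.betaIntegral, ← intervalIntegral.integral_ofReal]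
  refine intervalIntegral.integral_congr fun t ht => ?_
  rw [Set.uIcc_of_le (by norm_num : (0:ℝ) ≤ 1)] at ht
  push_cast
  rw [Complex.ofReal_cpow ht.1, Complex.ofReal_cpow (by linarith [ht.2])]
  push_cast
  ring

/-- Real integrability of the beta integrand. -/
lemma betaIntegrand_intervalIntegrable {a b : ℝ} (ha : 0 < a) (hb : 0 < b) :
    IntervalIntegrable (fun t : ℝ => t ^ (a - 1) * (1 - t) ^ (b - 1)) volume 0 1 := by
  have h := Complex.betaIntegral_convergent (u := (a : ℂ)) (v := (b : ℂ))
    (by simpa using ha) (by simpa using hb)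
  have h2 : IntervalIntegrable
      (fun t : ℝ => ((t : ℂ) ^ ((a : ℂ) - 1) * (1 - (t : ℂ)) ^ ((b : ℂ) - 1)).re)
      volume 0 1 := by
    constructor
    · exact h.1.re
    · exact h.2.re
  refine h2.congr_ae ?_
  rw [Set.uIoc_of_le (by norm_num : (0:ℝ) ≤ 1)]
  refine (ae_restrict_iff' measurableSet_Ioc).2 (Filter.Eventually.of_forall fun t ht => ?_)
  have h1 : ((a:ℂ) - 1) = ((a - 1 : ℝ) : ℂ) := by push_cast; ring
  have h1' : ((b:ℂ) - 1) = ((b - 1 : ℝ) : ℂ) := by push_cast; ring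
  have e1 : (t : ℂ) ^ ((a : ℂ) - 1) = ((t ^ (a - 1) : ℝ) : ℂ) := by
    rw [h1, Complex.ofReal_cpow ht.1.le]
  have e2 : (1 - (t : ℂ)) ^ ((b : ℂ) - 1) = (((1 - t) ^ (b - 1) : ℝ) : ℂ) := by
    rw [h1', show (1 - (t:ℂ)) = (((1 - t : ℝ)) : ℂ) by push_cast; ring,
      Complex.ofReal_cpow (by linarith [ht.2])]
  simp only [e1, e2, ← Complex.ofReal_mul, Complex.ofReal_re]

/-- Real Beta–Gamma relation. -/
lemma Gamma_mul_Gamma_eq_real {a b : ℝ} (ha : 0 < a) (hb : 0 < b) :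
    Real.Gamma a * Real.Gamma b =
      Real.Gamma (a + b) * ∫ t in (0:ℝ)..1, t ^ (a - 1) * (1 - t) ^ (b - 1) := by
  have := Complex.Gamma_mul_Gamma_eq_betaIntegral (s := (a : ℂ)) (t := (b : ℂ))
    (by simpa using ha) (by simpa using hb)
  rw [betaIntegral_ofReal] at this
  have : ((Real.Gamma a * Real.Gamma b : ℝ) : ℂ) =
      ((Real.Gamma (a + b) * ∫ t in (0:ℝ)..1, t ^ (a - 1) * (1 - t) ^ (b - 1) : ℝ) : ℂ) := by
    push_cast
    rw [← Complex.Gamma_ofReal, ← Complex.Gamma_ofReal, ← Complex.Gamma_ofReal]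
    push_cast
    exact this
  exact_mod_cast this

/-- For real numbers `0 < x < y`, the function `β ↦ Γ(x+β)/Γ(y+β)` is strictly
decreasing on `(0, ∞)`. -/
theorem gamma_ratio_strictAntiOn (x y : ℝ) (hx : 0 < x) (hxy : x < y) :
    StrictAntiOn (fun β : ℝ => Real.Gamma (x + β) / Real.Gamma (y + β)) (Set.Ioi 0) := by
  intro b1 hb1 b2 hb2 h12
  simp only [Set.mem_Ioi] at hb1 hb2
  have hyx : 0 < y - x := by linarith
  have key : ∀ β : ℝ, 0 < β → Real.Gamma (x + β) / Real.Gamma (y + β) =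
      (∫ t in (0:ℝ)..1, t ^ (x + β - 1) * (1 - t) ^ (y - x - 1)) / Real.Gamma (y - x) := by
    intro β hβ
    have hg := Gamma_mul_Gamma_eq_real (a := x + β) (b := y - x) (by linarith) hyx
    have hsum : x + β + (y - x) = y + β := by ring
    rw [hsum] at hg
    have hG1 : 0 < Real.Gamma (y + β) := Real.Gamma_pos_of_pos (by linarith)
    have hG2 : 0 < Real.Gamma (y - x) := Real.Gamma_pos_of_pos hyx
    field_simp
    linarith [hg]
  simp only []
  rw [key b1 hb1, key b2 hb2]
  have hG2 : 0 < Real.Gamma (y - x) := Real.Gamma_pos_of_pos hyx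
  refine div_lt_div_of_pos_right ?_ hG2
  -- strict inequality of integrals
  have hi1 := betaIntegrand_intervalIntegrable (a := x + b1) (b := y - x) (by linarith) hyx
  have hi2 := betaIntegrand_intervalIntegrable (a := x + b2) (b := y - x) (by linarith) hyx
  rw [intervalIntegral.integral_of_le (by norm_num : (0:ℝ) ≤ 1),
    intervalIntegral.integral_of_le (by norm_num : (0:ℝ) ≤ 1),
    MeasureTheory.integral_Ioc_eq_integral_Ioo, MeasureTheory.integral_Ioc_eq_integral_Ioo]
  have hIi1 : IntegrableOn (fun t : ℝ => t ^ (x + b1 - 1) * (1 - t) ^ (y - x - 1)) (Ioo 0 1) :=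
    ((intervalIntegrable_iff_integrableOn_Ioc_of_le (by norm_num)).1 hi1).mono_set
      Ioo_subset_Ioc_self
  have hIi2 : IntegrableOn (fun t : ℝ => t ^ (x + b2 - 1) * (1 - t) ^ (y - x - 1)) (Ioo 0 1) :=
    ((intervalIntegrable_iff_integrableOn_Ioc_of_le (by norm_num)).1 hi2).mono_set
      Ioo_subset_Ioc_self
  have hdiff : (0:ℝ) < ∫ t in Ioo (0:ℝ) 1,
      (t ^ (x + b1 - 1) * (1 - t) ^ (y - x - 1) - t ^ (x + b2 - 1) * (1 - t) ^ (y - x - 1)) := by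
    have hpos : ∀ t ∈ Ioo (0:ℝ) 1,
        0 < t ^ (x + b1 - 1) * (1 - t) ^ (y - x - 1)
          - t ^ (x + b2 - 1) * (1 - t) ^ (y - x - 1) := by
      intro t ht
      have h1 : t ^ (x + b2 - 1) < t ^ (x + b1 - 1) :=
        Real.rpow_lt_rpow_of_exponent_gt ht.1 ht.2 (by linarith)
      have h2 : (0:ℝ) < (1 - t) ^ (y - x - 1) := Real.rpow_pos_of_pos (by linarith [ht.2]) _
      nlinarith
    have hIsub : IntegrableOn (fun t : ℝ =>
        t ^ (x + b1 - 1) * (1 - t) ^ (y - x - 1)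
          - t ^ (x + b2 - 1) * (1 - t) ^ (y - x - 1)) (Ioo 0 1) := hIi1.sub hIi2
    rw [MeasureTheory.setIntegral_pos_iff_support_of_nonneg_ae ?_ hIsub]
    · have hsub : Ioo (0:ℝ) 1 ⊆ Function.support (fun t : ℝ =>
          t ^ (x + b1 - 1) * (1 - t) ^ (y - x - 1)
            - t ^ (x + b2 - 1) * (1 - t) ^ (y - x - 1)) := by
        intro t ht
        exact ne_of_gt (hpos t ht)
      rw [Set.inter_eq_self_of_subset_right hsub, Real.volume_Ioo]
      norm_num
    · refine (ae_restrict_iff' measurableSet_Ioo).2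
        (Filter.Eventually.of_forall fun t ht => (hpos t ht).le)
  have := MeasureTheory.integral_sub hIi1 hIi2
  rw [this] at hdiff
  linarith
end

section
/- For every real w > 1, one has 2/(2w+1) < ψ((w+1)/2) - ψ(w/2), where ψ is the digamma function. -/
open Real Set Filter Topology

/-- The digamma function `ψ = (log ∘ Γ)'`. -/
noncomputable def digamma (t : ℝ) : ℝ := deriv (fun s => Real.log (Real.Gamma s)) t

private lemma logGamma_diff {x : ℝ} (hx : 0 < x) :
    DifferentiableAt ℝ (fun s => Real.log (Real.Gamma s)) x := by
  have h : ∀ m : ℕ, x ≠ -m := fun m =>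
    (lt_of_le_of_lt (neg_nonpos.mpr m.cast_nonneg) hx).ne'
  exact (Real.differentiableAt_Gamma h).log (Real.Gamma_ne_zero h)

private lemma digamma_add_one {x : ℝ} (hx : 0 < x) : digamma (x + 1) = digamma x + 1 / x := by
  unfold digamma
  rw [← deriv_comp_add_const (fun s => Real.log (Real.Gamma s)) 1 x]
  have h : (fun s => Real.log (Real.Gamma (s + 1))) =ᶠ[nhds x]
      fun s => Real.log s + Real.log (Real.Gamma s) := by
    filter_upwards [eventually_gt_nhds hx] with s hs
    rw [Real.Gamma_add_one hs.ne', Real.log_mul hs.ne' (Real.Gamma_pos_of_pos hs).ne']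
  rw [h.deriv_eq, deriv_fun_add (Real.differentiableAt_log hx.ne') (logGamma_diff hx),
    Real.deriv_log, add_comm, one_div]

private lemma digamma_mono {a b : ℝ} (ha : 0 < a) (hab : a ≤ b) : digamma a ≤ digamma b := by
  have hc : ConvexOn ℝ (Ioi 0) (Real.log ∘ Real.Gamma) := Real.convexOn_log_Gamma
  have := hc.monotoneOn_deriv (fun x hx => logGamma_diff hx) (mem_Ioi.mpr ha)
    (mem_Ioi.mpr (ha.trans_le hab)) hab
  simpa [Function.comp_def, digamma] using this

private lemma D_rec {x : ℝ} (hx : 0 < x) :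
    digamma ((x + 1) / 2) - digamma (x / 2) =
      (digamma ((x + 2 + 1) / 2) - digamma ((x + 2) / 2)) + 2 / (x * (x + 1)) := by
  have h1 : digamma ((x + 2 + 1) / 2) = digamma ((x + 1) / 2) + 2 / (x + 1) := by
    have h := digamma_add_one (x := (x + 1) / 2) (by linarith)
    rw [show (x + 1) / 2 + 1 = (x + 2 + 1) / 2 by ring, one_div_div] at h
    exact h
  have h2 : digamma ((x + 2) / 2) = digamma (x / 2) + 2 / x := by
    have h := digamma_add_one (x := x / 2) (by linarith)
    rw [show x / 2 + 1 = (x + 2) / 2 by ring, one_div_div] at h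
    exact h
  rw [h1, h2]
  field_simp
  ring

private lemma D_ge_partial (n : ℕ) : ∀ x : ℝ, 0 < x →
    2 / (2 * x + 1) - 2 / (2 * x + 4 * n + 1) ≤ digamma ((x + 1) / 2) - digamma (x / 2) := by
  induction n with
  | zero =>
    intro x hx
    simp only [Nat.cast_zero, mul_zero, add_zero, sub_self]
    exact sub_nonneg.mpr (digamma_mono (by linarith) (by linarith))
  | succ n ih =>
    intro x hx
    have hrec := D_rec hx
    have h2 := ih (x + 2) (by linarith)
    have key : 2 / (2 * x + 1) - 2 / (2 * x + 5) ≤ 2 / (x * (x + 1)) := by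
      rw [div_sub_div _ _ (by positivity) (by positivity),
        div_le_div_iff₀ (by positivity) (by positivity)]
      nlinarith
    have hcast : (↑(n + 1) : ℝ) = (n : ℝ) + 1 := by push_cast; ring
    rw [hcast]
    have e1 : 2 * (x + 2) + 1 = 2 * x + 5 := by ring
    have e2 : 2 * (x + 2) + 4 * (n : ℝ) + 1 = 2 * x + 4 * ((n : ℝ) + 1) + 1 := by ring
    rw [e1, e2] at h2
    linarith

private lemma D_ge {x : ℝ} (hx : 0 < x) :
    2 / (2 * x + 1) ≤ digamma ((x + 1) / 2) - digamma (x / 2) := by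
  have htop : Tendsto (fun n : ℕ => 2 * x + 4 * (n : ℝ) + 1) atTop atTop := by
    apply tendsto_atTop_add_const_right
    apply tendsto_atTop_add_const_left
    exact (tendsto_natCast_atTop_atTop (R := ℝ)).const_mul_atTop (by norm_num)
  have h0 : Tendsto (fun n : ℕ => 2 / (2 * x + 4 * (n : ℝ) + 1)) atTop (nhds 0) :=
    Tendsto.div_atTop tendsto_const_nhds htop
  have hl : Tendsto (fun n : ℕ => 2 / (2 * x + 1) - 2 / (2 * x + 4 * (n : ℝ) + 1)) atTop
      (nhds (2 / (2 * x + 1))) := by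
    simpa using tendsto_const_nhds.sub h0
  exact le_of_tendsto hl (Filter.Eventually.of_forall fun n => D_ge_partial n x hx)

/-- For `w > 1`, `2/(2w+1) < ψ((w+1)/2) - ψ(w/2)`. -/
theorem digamma_half_diff_lower (w : ℝ) (hw : 1 < w) :
    2 / (2 * w + 1) < digamma ((w + 1) / 2) - digamma (w / 2) := by
  have hw0 : 0 < w := by linarith
  have hrec := D_rec hw0
  have h2 := D_ge (x := w + 2) (by linarith)
  rw [show 2 * (w + 2) + 1 = 2 * w + 5 by ring] at h2
  have key : 2 / (2 * w + 1) - 2 / (2 * w + 5) < 2 / (w * (w + 1)) := by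
    rw [div_sub_div _ _ (by positivity) (by positivity),
      div_lt_div_iff₀ (by positivity) (by positivity)]
    nlinarith
  linarith
end

section
/- For n a natural number with n > 1 and reals β, δ with 0 < β < n, 0 < δ < n, and n < β + δ < 2n, the convolution of Riesz potentials satisfies (|·|^{-β} * |·|^{-δ})(x) = π^{n/2}·[Γ((n-β)/2)Γ((n-δ)/2)Γ((β+δ-n)/2) / (Γ(β/2)Γ(δ/2)Γ((2n-β-δ)/2))]·|x|^{-(β+δ-n)} for all nonzero x ∈ ℝⁿ. -/
open MeasureTheory

section RieszAux

open Set Real ENNReal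

-- Gamma subordination at lintegral level
lemma lint_gamma {a r : ℝ} (ha : 0 < a) (hr : 0 < r) :
    ∫⁻ t in Ioi (0:ℝ), ENNReal.ofReal (t ^ (a-1) * Real.exp (-(r*t)))
      = ENNReal.ofReal (r ^ (-a) * Real.Gamma a) := by
  have hint : IntegrableOn (fun t : ℝ => t ^ (a-1) * Real.exp (-(r*t))) (Ioi 0) := by
    have h0 := Real.GammaIntegral_convergent ha
    have h1 : IntegrableOn (fun t : ℝ => Real.exp (-(r*t)) * (r*t) ^ (a-1)) (Ioi 0) := by
      have := (integrableOn_Ioi_comp_mul_left_iff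
        (fun s : ℝ => Real.exp (-s) * s ^ (a-1)) 0 hr).mpr (by simpa using h0)
      simpa using this
    have h2 := h1.const_mul (r ^ (1-a))
    apply (IntegrableOn.congr_fun h2 · measurableSet_Ioi)
    intro t ht
    have ht' : (0:ℝ) < t := ht
    simp only [Real.mul_rpow hr.le ht'.le]
    rw [show r ^ (1-a) * (Real.exp (-(r*t)) * (r ^ (a-1) * t ^ (a-1)))
        = (r ^ (1-a) * r ^ (a-1)) * (t ^ (a-1) * Real.exp (-(r*t))) by ring,
      ← Real.rpow_add hr]
    norm_num
  have hnn : 0 ≤ᵐ[volume.restrict (Ioi (0:ℝ))] fun t => t ^ (a-1) * Real.exp (-(r*t)) := by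
    filter_upwards [ae_restrict_mem measurableSet_Ioi] with t ht
    have : (0:ℝ) < t := ht
    positivity
  rw [← ofReal_integral_eq_lintegral_ofReal hint hnn,
    integral_rpow_mul_exp_neg_mul_Ioi ha hr]
  congr 1
  rw [one_div, ← Real.rpow_neg_one r, ← Real.rpow_mul hr.le, neg_one_mul]

-- substitution s = t * u in lintegral over Ioi 0
lemma lint_comp_mul {f : ℝ → ℝ≥0∞} (hf : Measurable f) {t : ℝ} (ht : 0 < t) :
    ∫⁻ s in Ioi (0:ℝ), f s = ENNReal.ofReal t * ∫⁻ u in Ioi (0:ℝ), f (t * u) := by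
  have hg : Measurable ((Ioi (0:ℝ)).indicator f) := hf.indicator measurableSet_Ioi
  have h1 : ∫⁻ u in Ioi (0:ℝ), f (t * u) = ∫⁻ u, (Ioi (0:ℝ)).indicator f (t * u) := by
    rw [← lintegral_indicator measurableSet_Ioi]
    refine lintegral_congr fun u => ?_
    by_cases hu : u ∈ Ioi (0:ℝ)
    · rw [indicator_of_mem hu, indicator_of_mem (by exact mul_pos ht hu)]
    · rw [indicator_of_notMem hu, indicator_of_notMem]
      simp only [mem_Ioi, not_lt] at hu ⊢
      exact mul_nonpos_of_nonneg_of_nonpos ht.le hu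
  have h2 : ∫⁻ u, (Ioi (0:ℝ)).indicator f (t * u)
      = ∫⁻ s, (Ioi (0:ℝ)).indicator f s ∂(Measure.map (t * ·) volume) :=
    (lintegral_map hg (measurable_const_mul t)).symm
  rw [h1, h2, Real.map_volume_mul_left (ne_of_gt ht), lintegral_smul_measure,
    lintegral_indicator measurableSet_Ioi, abs_of_pos (inv_pos.mpr ht), smul_eq_mul, ← mul_assoc,
    ← ENNReal.ofReal_mul ht.le, mul_inv_cancel₀ (ne_of_gt ht), ENNReal.ofReal_one, one_mul]

-- Gaussian integral, lintegral level
lemma lint_gauss (n : ℕ) {b : ℝ} (hb : 0 < b) :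
    ∫⁻ v : EuclideanSpace ℝ (Fin n), ENNReal.ofReal (Real.exp (-(b * ‖v‖^2)))
      = ENNReal.ofReal ((π/b)^((n:ℝ)/2)) := by
  have hI : Integrable (fun v : EuclideanSpace ℝ (Fin n) => Real.exp (-(b * ‖v‖^2))) := by
    have := (GaussianFourier.integrable_cexp_neg_mul_sq_norm_add (V := EuclideanSpace ℝ (Fin n))
      (b := (b:ℂ)) (by simpa using hb) 0 0).norm
    apply this.congr
    filter_upwards with v
    rw [Complex.norm_exp]
    norm_num
    left
    rw [← Complex.ofReal_pow]
    exact Complex.ofReal_re _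
  rw [← ofReal_integral_eq_lintegral_ofReal hI
    (Filter.Eventually.of_forall fun v => (Real.exp_pos _).le)]
  congr 1
  have := GaussianFourier.integral_rexp_neg_mul_sq_norm (V := EuclideanSpace ℝ (Fin n)) hb
  simp only [neg_mul] at this ⊢
  rw [this, finrank_euclideanSpace_fin]

-- Gaussian convolution, lintegral level
lemma lint_gauss_conv (n : ℕ) {t s : ℝ} (ht : 0 < t) (hs : 0 < s)
    (x : EuclideanSpace ℝ (Fin n)) :
    ∫⁻ y : EuclideanSpace ℝ (Fin n), ENNReal.ofReal (Real.exp (-(t*‖x-y‖^2 + s*‖y‖^2)))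
      = ENNReal.ofReal ((π/(t+s))^((n:ℝ)/2) * Real.exp (-(t*s/(t+s) * ‖x‖^2))) := by
  have hts : 0 < t + s := by linarith
  have key : ∀ y : EuclideanSpace ℝ (Fin n),
      t*‖x-y‖^2 + s*‖y‖^2 = (t+s)*‖y - (t/(t+s))•x‖^2 + t*s/(t+s)*‖x‖^2 := by
    intro y
    have h1 : ‖x - y‖^2 = ‖x‖^2 - 2 * inner ℝ x y + ‖y‖^2 := @norm_sub_sq_real _ _ _ x y
    have h2 : ‖y - (t/(t+s))•x‖^2
        = ‖y‖^2 - 2 * ((t/(t+s)) * inner ℝ x y) + (t/(t+s))^2 * ‖x‖^2 := by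
      rw [@norm_sub_sq_real _ _ _ y ((t/(t+s))•x), real_inner_smul_right, norm_smul,
        real_inner_comm]
      rw [mul_pow, Real.norm_eq_abs, sq_abs]
    rw [h1, h2]
    field_simp
    ring
  calc ∫⁻ y : EuclideanSpace ℝ (Fin n), ENNReal.ofReal (Real.exp (-(t*‖x-y‖^2 + s*‖y‖^2)))
      = ∫⁻ y : EuclideanSpace ℝ (Fin n),
          ENNReal.ofReal (Real.exp (-((t+s)*‖y - (t/(t+s))•x‖^2)))
            * ENNReal.ofReal (Real.exp (-(t*s/(t+s)*‖x‖^2))) := by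
        refine lintegral_congr fun y => ?_
        rw [← ENNReal.ofReal_mul (Real.exp_pos _).le, ← Real.exp_add, key y]
        ring_nf
    _ = (∫⁻ y : EuclideanSpace ℝ (Fin n),
          ENNReal.ofReal (Real.exp (-((t+s)*‖y - (t/(t+s))•x‖^2))))
            * ENNReal.ofReal (Real.exp (-(t*s/(t+s)*‖x‖^2))) := by
        rw [lintegral_mul_const' _ _ ENNReal.ofReal_ne_top]
    _ = ENNReal.ofReal ((π/(t+s))^((n:ℝ)/2)) * ENNReal.ofReal (Real.exp (-(t*s/(t+s)*‖x‖^2))) := by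
        congr 1
        rw [← lint_gauss n hts]
        exact lintegral_sub_right_eq_self
          (fun y : EuclideanSpace ℝ (Fin n) => ENNReal.ofReal (Real.exp (-((t+s)*‖y‖^2))))
          ((t/(t+s))•x)
    _ = ENNReal.ofReal ((π/(t+s))^((n:ℝ)/2) * Real.exp (-(t*s/(t+s) * ‖x‖^2))) := by
        rw [← ENNReal.ofReal_mul (by positivity)]

lemma lint_beta {p q : ℝ} (hp : 0 < p) (hq : 0 < q) :
    ∫⁻ u in Ioi (0:ℝ), ENNReal.ofReal (u ^ (q-1) * (1+u) ^ (-(p+q)))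
      = ENNReal.ofReal (Real.Gamma p * Real.Gamma q / Real.Gamma (p+q)) := by
  have hpq : 0 < p + q := by linarith
  have hΓ : 0 < Real.Gamma (p+q) := Real.Gamma_pos_of_pos hpq
  have key : ENNReal.ofReal (Real.Gamma (p+q)) *
      ∫⁻ u in Ioi (0:ℝ), ENNReal.ofReal (u ^ (q-1) * (1+u) ^ (-(p+q)))
      = ENNReal.ofReal (Real.Gamma p) * ENNReal.ofReal (Real.Gamma q) := by
    rw [← lintegral_const_mul' _ _ ENNReal.ofReal_ne_top]
    calc ∫⁻ u in Ioi (0:ℝ),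
          ENNReal.ofReal (Real.Gamma (p+q)) * ENNReal.ofReal (u ^ (q-1) * (1+u) ^ (-(p+q)))
        = ∫⁻ u in Ioi (0:ℝ), ∫⁻ r in Ioi (0:ℝ),
            ENNReal.ofReal (u ^ (q-1)) * ENNReal.ofReal (r ^ (p+q-1) * Real.exp (-((1+u)*r))) := by
          refine setLIntegral_congr_fun measurableSet_Ioi ?_
          intro u hu
          beta_reduce
          have hu' : (0:ℝ) < u := hu
          rw [lintegral_const_mul' _ _ ENNReal.ofReal_ne_top,
            lint_gamma hpq (by linarith : (0:ℝ) < 1 + u),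
            ← ENNReal.ofReal_mul (Real.Gamma_pos_of_pos hpq).le,
            ← ENNReal.ofReal_mul (Real.rpow_nonneg hu'.le _)]
          congr 1
          ring
      _ = ∫⁻ r in Ioi (0:ℝ), ∫⁻ u in Ioi (0:ℝ),
            ENNReal.ofReal (u ^ (q-1)) * ENNReal.ofReal (r ^ (p+q-1) * Real.exp (-((1+u)*r))) := by
          refine lintegral_lintegral_swap ?_
          apply Measurable.aemeasurable
          fun_prop
      _ = ∫⁻ r in Ioi (0:ℝ),
            ENNReal.ofReal (r ^ (p-1) * Real.exp (-r)) * ENNReal.ofReal (Real.Gamma q) := by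
          refine setLIntegral_congr_fun measurableSet_Ioi ?_
          intro r hr
          beta_reduce
          have hr' : (0:ℝ) < r := hr
          have step : ∀ᵐ u ∂(volume.restrict (Ioi (0:ℝ))),
              ENNReal.ofReal (u ^ (q-1)) * ENNReal.ofReal (r ^ (p+q-1) * Real.exp (-((1+u)*r)))
                = ENNReal.ofReal (r ^ (p+q-1) * Real.exp (-r))
                  * ENNReal.ofReal (u ^ (q-1) * Real.exp (-(r*u))) := by
            filter_upwards [ae_restrict_mem measurableSet_Ioi] with u hu
            have hu' : (0:ℝ) < u := hu
            rw [← ENNReal.ofReal_mul (Real.rpow_nonneg hu'.le _),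
              ← ENNReal.ofReal_mul (by positivity)]
            congr 1
            rw [show -((1+u)*r) = -r + -(r*u) by ring, Real.exp_add]
            ring
          rw [lintegral_congr_ae step, lintegral_const_mul' _ _ ENNReal.ofReal_ne_top,
            lint_gamma hq hr', ← ENNReal.ofReal_mul (by positivity),
            ← ENNReal.ofReal_mul (by positivity)]
          congr 1
          rw [show p + q - 1 = (p - 1) + q by ring, Real.rpow_add hr']
          rw [Real.rpow_neg hr'.le]
          field_simp [ne_of_gt (Real.rpow_pos_of_pos hr' q)]
      _ = ENNReal.ofReal (Real.Gamma p) * ENNReal.ofReal (Real.Gamma q) := by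
          rw [lintegral_mul_const' _ _ ENNReal.ofReal_ne_top]
          congr 1
          have := lint_gamma hp (one_pos : (0:ℝ) < 1)
          simpa using this
  have h0 : ENNReal.ofReal (Real.Gamma (p+q)) ≠ 0 := by
    simpa [ENNReal.ofReal_pos] using hΓ
  refine (ENNReal.mul_right_inj h0 ENNReal.ofReal_ne_top).mp ?_
  rw [key, ← ENNReal.ofReal_mul hΓ.le, mul_div_cancel₀ _ (ne_of_gt hΓ),
    ← ENNReal.ofReal_mul (Real.Gamma_pos_of_pos hp).le]

lemma sq_rpow_helper {c : ℝ} (hc : 0 < c) (e : ℝ) : (c^2) ^ (-(e/2)) = c ^ (-e) := by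
  rw [← Real.rpow_natCast c 2, ← Real.rpow_mul hc.le]
  congr 1
  push_cast
  ring


set_option maxHeartbeats 1600000 in
theorem main_lint (n : ℕ) (hn : 1 < n) (β δ : ℝ)
    (hβ0 : 0 < β) (hβn : β < n) (hδ0 : 0 < δ) (hδn : δ < n)
    (hsum1 : (n : ℝ) < β + δ) (hsum2 : β + δ < 2 * n)
    (x : EuclideanSpace ℝ (Fin n)) (hx : x ≠ 0) :
    ∫⁻ y : EuclideanSpace ℝ (Fin n), ENNReal.ofReal (‖x - y‖ ^ (-β) * ‖y‖ ^ (-δ))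
      = ENNReal.ofReal (Real.pi ^ ((n : ℝ) / 2) *
        (Real.Gamma (((n : ℝ) - β) / 2) * Real.Gamma (((n : ℝ) - δ) / 2) *
          Real.Gamma ((β + δ - n) / 2) /
        (Real.Gamma (β / 2) * Real.Gamma (δ / 2) *
          Real.Gamma ((2 * (n : ℝ) - β - δ) / 2))) *
        ‖x‖ ^ (-(β + δ - (n : ℝ)))) := by
  set N : ℝ := (n : ℝ) with hN
  have hN1 : (1:ℝ) ≤ N := by rw [hN]; exact_mod_cast hn.le
  haveI : Nontrivial (EuclideanSpace ℝ (Fin n)) := by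
    apply Module.nontrivial_of_finrank_pos (R := ℝ)
    rw [finrank_euclideanSpace_fin]
    omega
  set γ : ℝ := (β + δ - N)/2 with hγdef
  set p : ℝ := (N - δ)/2 with hpdef
  set q : ℝ := (N - β)/2 with hqdef
  have hγ : 0 < γ := by simp only [hγdef]; linarith
  have hp : 0 < p := by simp only [hpdef]; linarith
  have hq : 0 < q := by simp only [hqdef]; linarith
  have ha1 : 0 < β/2 := by linarith
  have ha2 : 0 < δ/2 := by linarith
  have hxn : 0 < ‖x‖ := norm_pos_iff.mpr hx
  have hA : 0 < ‖x‖^2 := by positivity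
  have hΓβ : 0 < Real.Gamma (β/2) := Real.Gamma_pos_of_pos ha1
  have hΓδ : 0 < Real.Gamma (δ/2) := Real.Gamma_pos_of_pos ha2
  have hΓpq : 0 < Real.Gamma (p+q) := Real.Gamma_pos_of_pos (by linarith)
  -- cancellation setup
  have h0 : ENNReal.ofReal (Real.Gamma (β/2) * Real.Gamma (δ/2)) ≠ 0 := by
    simp only [ne_eq, ENNReal.ofReal_eq_zero, not_le]
    positivity
  refine (ENNReal.mul_right_inj h0 ENNReal.ofReal_ne_top).mp ?_
  -- a.e. facts on y
  have hax : ∀ᵐ y : EuclideanSpace ℝ (Fin n) ∂volume, y ≠ x := by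
    rw [ae_iff]
    simp only [not_not, setOf_eq_eq_singleton]
    exact measure_singleton x
  have ha0 : ∀ᵐ y : EuclideanSpace ℝ (Fin n) ∂volume, y ≠ 0 := by
    rw [ae_iff]
    simp only [not_not, setOf_eq_eq_singleton]
    exact measure_singleton 0
  calc ENNReal.ofReal (Real.Gamma (β/2) * Real.Gamma (δ/2)) *
        ∫⁻ y : EuclideanSpace ℝ (Fin n), ENNReal.ofReal (‖x - y‖ ^ (-β) * ‖y‖ ^ (-δ))
      -- step 1: subordination
      = ∫⁻ y : EuclideanSpace ℝ (Fin n), ∫⁻ t in Ioi (0:ℝ), ∫⁻ s in Ioi (0:ℝ),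
          ENNReal.ofReal (t ^ (β/2-1) * Real.exp (-(‖x-y‖^2 * t)))
            * ENNReal.ofReal (s ^ (δ/2-1) * Real.exp (-(‖y‖^2 * s))) := by
        rw [← lintegral_const_mul' _ _ ENNReal.ofReal_ne_top]
        refine lintegral_congr_ae ?_
        filter_upwards [hax, ha0] with y hyx hy0
        have hxy : 0 < ‖x - y‖ := norm_pos_iff.mpr (sub_ne_zero_of_ne (Ne.symm hyx))
        have hy : 0 < ‖y‖ := norm_pos_iff.mpr hy0
        have e1 : ∫⁻ t in Ioi (0:ℝ), ENNReal.ofReal (t ^ (β/2-1) * Real.exp (-(‖x-y‖^2 * t)))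
            = ENNReal.ofReal ((‖x-y‖^2) ^ (-(β/2)) * Real.Gamma (β/2)) :=
          lint_gamma ha1 (by positivity)
        have e2 : ∀ t : ℝ, ∫⁻ s in Ioi (0:ℝ),
              ENNReal.ofReal (s ^ (δ/2-1) * Real.exp (-(‖y‖^2 * s)))
            = ENNReal.ofReal ((‖y‖^2) ^ (-(δ/2)) * Real.Gamma (δ/2)) :=
          fun _ => lint_gamma ha2 (by positivity)
        calc ENNReal.ofReal (Real.Gamma (β/2) * Real.Gamma (δ/2))
              * ENNReal.ofReal (‖x - y‖ ^ (-β) * ‖y‖ ^ (-δ))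
            = (∫⁻ t in Ioi (0:ℝ), ENNReal.ofReal (t ^ (β/2-1) * Real.exp (-(‖x-y‖^2 * t))))
              * ∫⁻ s in Ioi (0:ℝ), ENNReal.ofReal (s ^ (δ/2-1) * Real.exp (-(‖y‖^2 * s))) := by
              rw [e1, e2 0, ← ENNReal.ofReal_mul (by positivity),
                ← ENNReal.ofReal_mul (by positivity)]
              congr 1
              rw [sq_rpow_helper hxy β, sq_rpow_helper hy δ]
              ring
          _ = ∫⁻ t in Ioi (0:ℝ), ∫⁻ s in Ioi (0:ℝ),
              ENNReal.ofReal (t ^ (β/2-1) * Real.exp (-(‖x-y‖^2 * t)))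
                * ENNReal.ofReal (s ^ (δ/2-1) * Real.exp (-(‖y‖^2 * s))) := by
              rw [← lintegral_mul_const'' _ (by fun_prop)]
              refine setLIntegral_congr_fun measurableSet_Ioi ?_
              intro t ht
              beta_reduce
              rw [lintegral_const_mul' _ _ ENNReal.ofReal_ne_top]
    -- step 2: Fubini, twice
    _ = ∫⁻ t in Ioi (0:ℝ), ∫⁻ s in Ioi (0:ℝ), ∫⁻ y : EuclideanSpace ℝ (Fin n),
          ENNReal.ofReal (t ^ (β/2-1) * Real.exp (-(‖x-y‖^2 * t)))
            * ENNReal.ofReal (s ^ (δ/2-1) * Real.exp (-(‖y‖^2 * s))) := by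
        rw [lintegral_lintegral_swap (Measurable.lintegral_prod_right'
          (f := fun z : (EuclideanSpace ℝ (Fin n) × ℝ) × ℝ =>
            ENNReal.ofReal (z.1.2 ^ (β/2-1) * Real.exp (-(‖x - z.1.1‖^2 * z.1.2)))
              * ENNReal.ofReal (z.2 ^ (δ/2-1) * Real.exp (-(‖z.1.1‖^2 * z.2))))
          (by fun_prop)).aemeasurable]
        refine setLIntegral_congr_fun measurableSet_Ioi ?_
        intro t ht
        beta_reduce
        rw [lintegral_lintegral_swap (by fun_prop)]
    -- step 3: Gaussian convolution
    _ = ∫⁻ t in Ioi (0:ℝ), ∫⁻ s in Ioi (0:ℝ),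
          ENNReal.ofReal (t ^ (β/2-1) * s ^ (δ/2-1) *
            ((π/(t+s))^(N/2) * Real.exp (-(t*s/(t+s) * ‖x‖^2)))) := by
        refine setLIntegral_congr_fun measurableSet_Ioi ?_
        intro t ht
        beta_reduce
        refine setLIntegral_congr_fun measurableSet_Ioi ?_
        intro s hs
        beta_reduce
        have ht' : (0:ℝ) < t := ht
        have hs' : (0:ℝ) < s := hs
        have merge : ∀ y : EuclideanSpace ℝ (Fin n),
            ENNReal.ofReal (t ^ (β/2-1) * Real.exp (-(‖x-y‖^2 * t)))
              * ENNReal.ofReal (s ^ (δ/2-1) * Real.exp (-(‖y‖^2 * s)))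
            = ENNReal.ofReal (t ^ (β/2-1) * s ^ (δ/2-1))
              * ENNReal.ofReal (Real.exp (-(t*‖x-y‖^2 + s*‖y‖^2))) := by
          intro y
          rw [← ENNReal.ofReal_mul (by positivity), ← ENNReal.ofReal_mul (by positivity)]
          congr 1
          rw [show -(t*‖x-y‖^2 + s*‖y‖^2) = -(‖x-y‖^2 * t) + -(‖y‖^2 * s) by ring,
            Real.exp_add]
          ring
        rw [lintegral_congr fun y => merge y,
          lintegral_const_mul' _ _ ENNReal.ofReal_ne_top,
          lint_gauss_conv n ht' hs' x, ← ENNReal.ofReal_mul (by positivity), mul_assoc]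
    -- step 4: substitute s = t*u and simplify
    _ = ∫⁻ t in Ioi (0:ℝ), ∫⁻ u in Ioi (0:ℝ),
          ENNReal.ofReal (π^(N/2)) *
            (ENNReal.ofReal (t ^ (γ-1) * Real.exp (-((‖x‖^2*u/(1+u)) * t)))
              * ENNReal.ofReal (u ^ (δ/2-1) * (1+u) ^ (-(N/2)))) := by
        refine setLIntegral_congr_fun measurableSet_Ioi ?_
        intro t ht
        beta_reduce
        have ht' : (0:ℝ) < t := ht
        rw [lint_comp_mul (by fun_prop) ht']
        rw [← lintegral_const_mul' _ _ ENNReal.ofReal_ne_top]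
        refine setLIntegral_congr_fun measurableSet_Ioi ?_
        intro u hu
        beta_reduce
        have hu' : (0:ℝ) < u := hu
        have h1u : (0:ℝ) < 1 + u := by linarith
        rw [← ENNReal.ofReal_mul ht'.le, ← ENNReal.ofReal_mul (by positivity),
          ← ENNReal.ofReal_mul (by positivity)]
        congr 1
        -- real identity
        have harg : t*(t*u)/(t+t*u) * ‖x‖^2 = (‖x‖^2*u/(1+u)) * t := by
          rw [show t+t*u = t*(1+u) by ring]
          field_simp
        rw [show t+t*u = t*(1+u) by ring, Real.mul_rpow ht'.le hu'.le,
          Real.div_rpow Real.pi_pos.le (by positivity), Real.mul_rpow ht'.le h1u.le]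
        rw [show t*(t*u)/(t*(1+u)) * ‖x‖^2 = (‖x‖^2*u/(1+u)) * t by field_simp]
        rw [show γ - 1 = (β/2-1) + ((δ/2-1) + (1 - N/2)) by rw [hγdef]; ring,
          Real.rpow_add ht', Real.rpow_add ht',
          show (1:ℝ) - N/2 = 1 + -(N/2) by ring, Real.rpow_add ht', Real.rpow_one,
          Real.rpow_neg ht'.le, Real.rpow_neg h1u.le]
        have htN : (0:ℝ) < t ^ (N/2) := Real.rpow_pos_of_pos ht' _
        have huN : (0:ℝ) < (1+u) ^ (N/2) := Real.rpow_pos_of_pos h1u _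
        field_simp
    -- step 5: swap, inner Gamma integral in t
    _ = ENNReal.ofReal (π^(N/2)) * ∫⁻ u in Ioi (0:ℝ),
          ENNReal.ofReal ((‖x‖^2*u/(1+u)) ^ (-γ) * Real.Gamma γ)
            * ENNReal.ofReal (u ^ (δ/2-1) * (1+u) ^ (-(N/2))) := by
        rw [← lintegral_const_mul' _ _ ENNReal.ofReal_ne_top]
        have swap : ∫⁻ t in Ioi (0:ℝ), ∫⁻ u in Ioi (0:ℝ),
              ENNReal.ofReal (π^(N/2)) *
                (ENNReal.ofReal (t ^ (γ-1) * Real.exp (-((‖x‖^2*u/(1+u)) * t)))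
                  * ENNReal.ofReal (u ^ (δ/2-1) * (1+u) ^ (-(N/2))))
            = ∫⁻ u in Ioi (0:ℝ), ∫⁻ t in Ioi (0:ℝ),
              ENNReal.ofReal (π^(N/2)) *
                (ENNReal.ofReal (t ^ (γ-1) * Real.exp (-((‖x‖^2*u/(1+u)) * t)))
                  * ENNReal.ofReal (u ^ (δ/2-1) * (1+u) ^ (-(N/2)))) :=
          lintegral_lintegral_swap (by fun_prop)
        rw [swap]
        refine setLIntegral_congr_fun measurableSet_Ioi ?_
        intro u hu
        beta_reduce
        have hu' : (0:ℝ) < u := hu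
        have h1u : (0:ℝ) < 1 + u := by linarith
        have hr : (0:ℝ) < ‖x‖^2*u/(1+u) := by positivity
        rw [lintegral_const_mul' _ _ ENNReal.ofReal_ne_top,
          lintegral_mul_const' _ _ ENNReal.ofReal_ne_top, lint_gamma hγ hr]
    -- step 6: beta integral in u
    _ = ENNReal.ofReal (π^(N/2)) * (ENNReal.ofReal (Real.Gamma γ * (‖x‖^2) ^ (-γ)) *
          ENNReal.ofReal (Real.Gamma p * Real.Gamma q / Real.Gamma (p+q))) := by
        congr 1
        rw [← lint_beta hp hq, ← lintegral_const_mul' _ _ ENNReal.ofReal_ne_top]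
        refine setLIntegral_congr_fun measurableSet_Ioi ?_
        intro u hu
        beta_reduce
        have hu' : (0:ℝ) < u := hu
        have h1u : (0:ℝ) < 1 + u := by linarith
        rw [← ENNReal.ofReal_mul (by positivity), ← ENNReal.ofReal_mul (by positivity)]
        congr 1
        rw [Real.div_rpow (by positivity) h1u.le, Real.mul_rpow hA.le hu'.le,
          Real.rpow_neg h1u.le γ]
        rw [show q - 1 = -γ + (δ/2 - 1) by rw [hqdef, hγdef]; ring, Real.rpow_add hu',
          show -(p+q) = γ + -(N/2) by rw [hpdef, hqdef, hγdef]; ring, Real.rpow_add h1u,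
          Real.rpow_neg hu'.le γ, Real.rpow_neg h1u.le (N/2)]
        have h1 : (0:ℝ) < (1+u) ^ γ := Real.rpow_pos_of_pos h1u _
        have h2 : (0:ℝ) < u ^ γ := Real.rpow_pos_of_pos hu' _
        field_simp
    -- step 7: final arithmetic
    _ = ENNReal.ofReal (Real.Gamma (β/2) * Real.Gamma (δ/2)) *
          ENNReal.ofReal (Real.pi ^ ((n : ℝ) / 2) *
            (Real.Gamma (((n : ℝ) - β) / 2) * Real.Gamma (((n : ℝ) - δ) / 2) *
              Real.Gamma ((β + δ - n) / 2) /
            (Real.Gamma (β / 2) * Real.Gamma (δ / 2) *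
              Real.Gamma ((2 * (n : ℝ) - β - δ) / 2))) *
            ‖x‖ ^ (-(β + δ - (n : ℝ)))) := by
        rw [← ENNReal.ofReal_mul (by positivity), ← ENNReal.ofReal_mul (by positivity),
          ← ENNReal.ofReal_mul (by positivity)]
        congr 1
        have e1 : Real.Gamma (((n:ℝ) - β)/2) = Real.Gamma q := by rw [hqdef, hN]
        have e2 : Real.Gamma (((n:ℝ) - δ)/2) = Real.Gamma p := by rw [hpdef, hN]
        have e3 : Real.Gamma ((β + δ - (n:ℝ))/2) = Real.Gamma γ := by rw [hγdef, hN]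
        have e4 : Real.Gamma ((2*(n:ℝ) - β - δ)/2) = Real.Gamma (p+q) := by
          congr 1
          rw [hpdef, hqdef, hN]
          ring
        have e5 : (‖x‖^2) ^ (-γ) = ‖x‖ ^ (-(β + δ - (n:ℝ))) := by
          rw [hγdef, hN]; exact sq_rpow_helper hxn _
        rw [e1, e2, e3, e4, e5]
        field_simp
        ring

end RieszAux

/-- Convolution of Riesz potentials: for `0 < β, δ < n` with `n < β + δ < 2n`,
`(|·|^{-β} * |·|^{-δ})(x) = π^{n/2}·[Γ((n-β)/2)Γ((n-δ)/2)Γ((β+δ-n)/2) /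
(Γ(β/2)Γ(δ/2)Γ((2n-β-δ)/2))]·|x|^{-(β+δ-n)}` for `x ≠ 0`. -/
theorem riesz_convolution (n : ℕ) (hn : 1 < n) (β δ : ℝ)
    (hβ0 : 0 < β) (hβn : β < n) (hδ0 : 0 < δ) (hδn : δ < n)
    (hsum1 : (n : ℝ) < β + δ) (hsum2 : β + δ < 2 * n)
    (x : EuclideanSpace ℝ (Fin n)) (hx : x ≠ 0) :
    ∫ y : EuclideanSpace ℝ (Fin n), ‖x - y‖ ^ (-β) * ‖y‖ ^ (-δ)
      = Real.pi ^ ((n : ℝ) / 2) *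
        (Real.Gamma (((n : ℝ) - β) / 2) * Real.Gamma (((n : ℝ) - δ) / 2) *
          Real.Gamma ((β + δ - n) / 2) /
        (Real.Gamma (β / 2) * Real.Gamma (δ / 2) *
          Real.Gamma ((2 * (n : ℝ) - β - δ) / 2))) *
        ‖x‖ ^ (-(β + δ - (n : ℝ))) := by
  have hf_nonneg : 0 ≤ᵐ[volume] fun y : EuclideanSpace ℝ (Fin n) =>
      ‖x - y‖ ^ (-β) * ‖y‖ ^ (-δ) :=
    Filter.Eventually.of_forall fun y => by positivity
  have hmeas : AEStronglyMeasurable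
      (fun y : EuclideanSpace ℝ (Fin n) => ‖x - y‖ ^ (-β) * ‖y‖ ^ (-δ)) volume := by
    apply Measurable.aestronglyMeasurable
    fun_prop
  rw [integral_eq_lintegral_of_nonneg_ae hf_nonneg hmeas,
    main_lint n hn β δ hβ0 hβn hδ0 hδn hsum1 hsum2 x hx, ENNReal.toReal_ofReal]
  have h1 : 0 < Real.Gamma (((n:ℝ) - β)/2) := Real.Gamma_pos_of_pos (by linarith)
  have h2 : 0 < Real.Gamma (((n:ℝ) - δ)/2) := Real.Gamma_pos_of_pos (by linarith)
  have h3 : 0 < Real.Gamma ((β + δ - (n:ℝ))/2) := Real.Gamma_pos_of_pos (by linarith)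
  have h4 : 0 < Real.Gamma (β/2) := Real.Gamma_pos_of_pos (by linarith)
  have h5 : 0 < Real.Gamma (δ/2) := Real.Gamma_pos_of_pos (by linarith)
  have h6 : 0 < Real.Gamma ((2*(n:ℝ) - β - δ)/2) := Real.Gamma_pos_of_pos (by linarith)
  have hnum : 0 ≤ Real.Gamma (((n:ℝ) - β)/2) * Real.Gamma (((n:ℝ) - δ)/2) *
      Real.Gamma ((β + δ - (n:ℝ))/2) / (Real.Gamma (β/2) * Real.Gamma (δ/2) *
      Real.Gamma ((2*(n:ℝ) - β - δ)/2)) :=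
    div_nonneg (by positivity) (by positivity)
  have hpi : (0:ℝ) ≤ Real.pi ^ ((n:ℝ)/2) := Real.rpow_nonneg Real.pi_pos.le _
  have hx' : (0:ℝ) ≤ ‖x‖ ^ (-(β + δ - (n:ℝ))) := Real.rpow_nonneg (norm_nonneg x) _
  exact mul_nonneg (mul_nonneg hpi hnum) hx'
end

section
/- Define F(β) = ln Γ(1/2 - β) + ln Γ(1 + β) - ln Γ(1 - β) - ln Γ(3/2 + β) + (1/2)·ln(1/4 + β²) for 0 ≤ β < 1/2. Then F(β) > 0 for all 0 < β < 1/2. -/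
open Real Filter Finset Nat

/-- Product of four `GammaSeq` terms, combined into a single fraction. -/
lemma gammaSeq_four_mul {s1 s2 s3 s4 : ℝ} (hs1 : 0 < s1) (hs2 : 0 < s2) (hs3 : 0 < s3)
    (hs4 : 0 < s4) {n : ℕ} (hn : 0 < n) :
    Real.GammaSeq s1 n * Real.GammaSeq s2 n * Real.GammaSeq s3 n * Real.GammaSeq s4 n =
      (n : ℝ) ^ (s1 + s2 + s3 + s4) * ((n ! : ℝ)) ^ 4 /
        ∏ j ∈ Finset.range (n + 1), ((s1 + j) * (s2 + j) * (s3 + j) * (s4 + j)) := by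
  have hnp : (0 : ℝ) < n := by exact_mod_cast hn
  have hP : ∀ s : ℝ, 0 < s → (∏ j ∈ Finset.range (n + 1), (s + j)) ≠ 0 := by
    intro s hs
    apply _root_.ne_of_gt
    apply Finset.prod_pos
    intro j _
    have : (0 : ℝ) ≤ j := Nat.cast_nonneg j
    linarith
  have h1 := hP s1 hs1
  have h2 := hP s2 hs2
  have h3 := hP s3 hs3
  have h4 := hP s4 hs4
  simp only [Real.GammaSeq]
  rw [Real.rpow_add hnp, Real.rpow_add hnp, Real.rpow_add hnp, Finset.prod_mul_distrib,
    Finset.prod_mul_distrib, Finset.prod_mul_distrib]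
  field_simp

/-- The key Gamma-function inequality, via Euler's limit formula. -/
lemma gamma_ratio_ge (β : ℝ) (h0 : 0 < β) (h2 : β < 1 / 2) :
    2 * (Real.Gamma (1 - β) * Real.Gamma (3 / 2 + β)) ≤
      Real.Gamma (1 / 2 - β) * Real.Gamma (1 + β) := by
  have h1 : (0 : ℝ) < 1 / 2 - β := by linarith
  have h3 : (0 : ℝ) < 1 + β := by linarith
  have h4 : (0 : ℝ) < 1 - β := by linarith
  have h5 : (0 : ℝ) < 3 / 2 + β := by linarith
  have key : ∀ n : ℕ,
      Real.GammaSeq (1 / 2) n * Real.GammaSeq 1 n * Real.GammaSeq (1 - β) n *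
          Real.GammaSeq (3 / 2 + β) n ≤
        Real.GammaSeq (1 / 2 - β) n * Real.GammaSeq (1 + β) n * Real.GammaSeq 1 n *
          Real.GammaSeq (3 / 2) n := by
    intro n
    rcases Nat.eq_zero_or_pos n with rfl | hn
    · simp only [Real.GammaSeq, Nat.cast_zero]
      rw [Real.zero_rpow (by norm_num : (1 / 2 : ℝ) ≠ 0),
        Real.zero_rpow (by norm_num : (1 : ℝ) ≠ 0),
        Real.zero_rpow (by linarith : (1 / 2 - β : ℝ) ≠ 0)]
      simp
    · rw [gammaSeq_four_mul (by norm_num) (by norm_num) h4 h5 hn,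
        gammaSeq_four_mul h1 h3 (by norm_num) (by norm_num) hn,
        show (1 / 2 + 1 + (1 - β) + (3 / 2 + β) : ℝ) = 4 by ring,
        show (1 / 2 - β + (1 + β) + 1 + 3 / 2 : ℝ) = 4 by ring]
      have hnp : (0 : ℝ) < n := by exact_mod_cast hn
      have hnum : (0 : ℝ) ≤ (n : ℝ) ^ (4 : ℝ) * ((n ! : ℝ)) ^ 4 := by positivity
      have hDpos : (0 : ℝ) < ∏ j ∈ Finset.range (n + 1),
          ((1 / 2 - β + j) * (1 + β + j) * (1 + j) * (3 / 2 + j)) := by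
        apply Finset.prod_pos
        intro j _
        have hj : (0 : ℝ) ≤ j := Nat.cast_nonneg j
        positivity
      apply div_le_div_of_nonneg_left hnum hDpos
      apply Finset.prod_le_prod
      · intro j _
        have hj : (0 : ℝ) ≤ j := Nat.cast_nonneg j
        positivity
      · intro j _
        have hj : (0 : ℝ) ≤ j := Nat.cast_nonneg j
        nlinarith [mul_pos h0 h0, mul_nonneg hj h0.le, mul_nonneg hj (mul_pos h0 h0).le,
          mul_nonneg (mul_nonneg hj hj) h0.le, mul_nonneg (mul_nonneg hj hj) (mul_pos h0 h0).le]
  have T1 : Filter.Tendsto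
      (fun n => Real.GammaSeq (1 / 2) n * Real.GammaSeq 1 n * Real.GammaSeq (1 - β) n *
        Real.GammaSeq (3 / 2 + β) n) atTop
      (nhds (Real.Gamma (1 / 2) * Real.Gamma 1 * Real.Gamma (1 - β) *
        Real.Gamma (3 / 2 + β))) :=
    (((Real.GammaSeq_tendsto_Gamma _).mul (Real.GammaSeq_tendsto_Gamma _)).mul
      (Real.GammaSeq_tendsto_Gamma _)).mul (Real.GammaSeq_tendsto_Gamma _)
  have T2 : Filter.Tendsto
      (fun n => Real.GammaSeq (1 / 2 - β) n * Real.GammaSeq (1 + β) n * Real.GammaSeq 1 n *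
        Real.GammaSeq (3 / 2) n) atTop
      (nhds (Real.Gamma (1 / 2 - β) * Real.Gamma (1 + β) * Real.Gamma 1 *
        Real.Gamma (3 / 2))) :=
    (((Real.GammaSeq_tendsto_Gamma _).mul (Real.GammaSeq_tendsto_Gamma _)).mul
      (Real.GammaSeq_tendsto_Gamma _)).mul (Real.GammaSeq_tendsto_Gamma _)
  have hle := le_of_tendsto_of_tendsto' T1 T2 key
  have hΓ1 : Real.Gamma 1 = 1 := Real.Gamma_one
  have hΓh : Real.Gamma (1 / 2) = Real.sqrt π := Real.Gamma_one_half_eq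
  have hΓ32 : Real.Gamma (3 / 2) = (1 / 2) * Real.sqrt π := by
    have : Real.Gamma (1 / 2 + 1) = (1 / 2) * Real.Gamma (1 / 2) :=
      Real.Gamma_add_one (by norm_num)
    rw [show (3 / 2 : ℝ) = 1 / 2 + 1 by norm_num, this, hΓh]
  rw [hΓ1, hΓh, hΓ32] at hle
  have hπ : (0 : ℝ) < Real.sqrt π := Real.sqrt_pos.mpr Real.pi_pos
  nlinarith [hle, hπ]

/-- With `F(β) = ln Γ(1/2-β) + ln Γ(1+β) - ln Γ(1-β) - ln Γ(3/2+β)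
+ (1/2)·ln(1/4+β²)`, one has `F(β) > 0` for `0 < β < 1/2`. -/
theorem logGamma_combination_pos (β : ℝ) (h0 : 0 < β) (h2 : β < 1 / 2) :
    0 < Real.log (Real.Gamma (1 / 2 - β)) + Real.log (Real.Gamma (1 + β))
        - Real.log (Real.Gamma (1 - β)) - Real.log (Real.Gamma (3 / 2 + β))
        + (1 / 2) * Real.log (1 / 4 + β ^ 2) := by
  have h1 : (0 : ℝ) < 1 / 2 - β := by linarith
  have h3 : (0 : ℝ) < 1 + β := by linarith
  have h4 : (0 : ℝ) < 1 - β := by linarith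
  have h5 : (0 : ℝ) < 3 / 2 + β := by linarith
  have hA : 0 < Real.Gamma (1 / 2 - β) := Real.Gamma_pos_of_pos h1
  have hB : 0 < Real.Gamma (1 + β) := Real.Gamma_pos_of_pos h3
  have hC : 0 < Real.Gamma (1 - β) := Real.Gamma_pos_of_pos h4
  have hD : 0 < Real.Gamma (3 / 2 + β) := Real.Gamma_pos_of_pos h5
  have hkey := gamma_ratio_ge β h0 h2
  -- log A + log B - log C - log D = log (A*B/(C*D))
  have hlogs : Real.log (Real.Gamma (1 / 2 - β)) + Real.log (Real.Gamma (1 + β))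
      - Real.log (Real.Gamma (1 - β)) - Real.log (Real.Gamma (3 / 2 + β)) =
      Real.log (Real.Gamma (1 / 2 - β) * Real.Gamma (1 + β) /
        (Real.Gamma (1 - β) * Real.Gamma (3 / 2 + β))) := by
    rw [Real.log_div (by positivity) (by positivity),
      Real.log_mul hA.ne' hB.ne', Real.log_mul hC.ne' hD.ne']
    ring
  rw [hlogs]
  have hCD : 0 < Real.Gamma (1 - β) * Real.Gamma (3 / 2 + β) := by positivity
  have hratio : (2 : ℝ) ≤ Real.Gamma (1 / 2 - β) * Real.Gamma (1 + β) /
      (Real.Gamma (1 - β) * Real.Gamma (3 / 2 + β)) := by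
    rw [le_div_iff₀ hCD]; linarith
  have hlog2 : Real.log 2 ≤ Real.log (Real.Gamma (1 / 2 - β) * Real.Gamma (1 + β) /
      (Real.Gamma (1 - β) * Real.Gamma (3 / 2 + β))) :=
    Real.log_le_log (by norm_num) hratio
  have hq : (1 / 4 + β ^ 2 : ℝ) = (1 + 4 * β ^ 2) / 4 := by ring
  have hlq : Real.log (1 / 4 + β ^ 2) = Real.log (1 + 4 * β ^ 2) - Real.log 4 := by
    rw [hq, Real.log_div (by positivity) (by norm_num)]
  have hlog4 : Real.log 4 = 2 * Real.log 2 := by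
    rw [show (4 : ℝ) = 2 ^ 2 by norm_num, Real.log_pow]; push_cast; ring
  have hpos : 0 < Real.log (1 + 4 * β ^ 2) := Real.log_pos (by nlinarith)
  rw [hlq, hlog4]
  linarith
end

section
/- For every natural number n ≥ 5, the constant D₂ = π²·max over k∈ℕ of [Γ((n+2k)/4)/Γ((n+2k+4)/4)]²·(1 + 8k/(n+2k-4)²) equals 16π²/n², i.e. the maximum is attained at k = 0. -/
open Real

private lemma gamma_ratio (x : ℝ) (hx : 0 < x) :
    Real.Gamma (x / 4) / Real.Gamma ((x + 4) / 4) = 4 / x := by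
  have h4 : (x + 4) / 4 = x / 4 + 1 := by ring
  rw [h4, Real.Gamma_add_one (by positivity)]
  have hg : Real.Gamma (x / 4) ≠ 0 := (Real.Gamma_pos_of_pos (by positivity)).ne'
  field_simp

private lemma term_eq (n k : ℕ) (hn : 5 ≤ n) :
    π ^ 2 * (Real.Gamma (((n : ℝ) + 2 * k) / 4) /
        Real.Gamma (((n : ℝ) + 2 * k + 4) / 4)) ^ 2 *
      (1 + 8 * k / ((n : ℝ) + 2 * k - 4) ^ 2)
    = π ^ 2 * (4 / ((n : ℝ) + 2 * k)) ^ 2 *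
      (1 + 8 * k / ((n : ℝ) + 2 * k - 4) ^ 2) := by
  have hN : (5 : ℝ) ≤ (n : ℝ) := by exact_mod_cast hn
  have hK : (0 : ℝ) ≤ (k : ℝ) := Nat.cast_nonneg k
  rw [gamma_ratio ((n : ℝ) + 2 * k) (by linarith)]

private lemma term_le (n k : ℕ) (hn : 5 ≤ n) :
    π ^ 2 * (4 / ((n : ℝ) + 2 * k)) ^ 2 *
      (1 + 8 * k / ((n : ℝ) + 2 * k - 4) ^ 2) ≤ 16 * π ^ 2 / (n : ℝ) ^ 2 := by
  have hN : (5 : ℝ) ≤ (n : ℝ) := by exact_mod_cast hn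
  have hK : (0 : ℝ) ≤ (k : ℝ) := Nat.cast_nonneg k
  have ha : (1 : ℝ) ≤ (n : ℝ) + 2 * k - 4 := by linarith
  have ha0 : (0 : ℝ) < ((n : ℝ) + 2 * k - 4) ^ 2 := by positivity
  have hx : (0 : ℝ) < (n : ℝ) + 2 * k := by linarith
  have key : (4 / ((n : ℝ) + 2 * k)) ^ 2 *
      (1 + 8 * k / ((n : ℝ) + 2 * k - 4) ^ 2) ≤ 16 / (n : ℝ) ^ 2 := by
    have e1 : 1 + 8 * (k : ℝ) / ((n : ℝ) + 2 * k - 4) ^ 2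
        = (((n : ℝ) + 2 * k - 4) ^ 2 + 8 * k) / ((n : ℝ) + 2 * k - 4) ^ 2 := by
      rw [add_div, div_self ha0.ne']
    rw [e1, div_pow, div_mul_div_comm,
      div_le_div_iff₀ (by positivity) (by positivity)]
    rcases Nat.eq_zero_or_pos k with hk0 | hk1
    · subst hk0; push_cast; ring_nf; nlinarith
    · have hK1 : (1 : ℝ) ≤ (k : ℝ) := by exact_mod_cast hk1
      have h5 : 0 ≤ ((n : ℝ) + 2 * k - 4) ^ 2 * ((n : ℝ) + k) - 2 * (n : ℝ) ^ 2 := by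
        nlinarith [sq_nonneg ((n : ℝ) - 5), sq_nonneg ((n : ℝ) + 2 * k - 9),
          mul_nonneg (sub_nonneg.2 hK1) (sub_nonneg.2 hN)]
      nlinarith [mul_nonneg hK h5]
  have hπ : (0 : ℝ) < π ^ 2 := by positivity
  calc π ^ 2 * (4 / ((n : ℝ) + 2 * k)) ^ 2 *
      (1 + 8 * k / ((n : ℝ) + 2 * k - 4) ^ 2)
      = π ^ 2 * ((4 / ((n : ℝ) + 2 * k)) ^ 2 *
        (1 + 8 * k / ((n : ℝ) + 2 * k - 4) ^ 2)) := by ring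
    _ ≤ π ^ 2 * (16 / (n : ℝ) ^ 2) := by
        exact mul_le_mul_of_nonneg_left key hπ.le
    _ = 16 * π ^ 2 / (n : ℝ) ^ 2 := by ring

/-- For `n ≥ 5`, the constant
`D₂ = π²·sup_k [Γ((n+2k)/4)/Γ((n+2k+4)/4)]²·(1+8k/(n+2k-4)²)` equals `16π²/n²`,
the supremum being attained at `k = 0`. -/
theorem D2_eq_of_five_le (n : ℕ) (hn : 5 ≤ n) :
    (⨆ k : ℕ, π ^ 2 *
        (Real.Gamma (((n : ℝ) + 2 * k) / 4) / Real.Gamma (((n : ℝ) + 2 * k + 4) / 4)) ^ 2 *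
        (1 + 8 * k / ((n : ℝ) + 2 * k - 4) ^ 2))
      = 16 * π ^ 2 / (n : ℝ) ^ 2 ∧
    π ^ 2 * (Real.Gamma (((n : ℝ) + 2 * 0) / 4) / Real.Gamma (((n : ℝ) + 2 * 0 + 4) / 4)) ^ 2 *
        (1 + 8 * 0 / ((n : ℝ) + 2 * 0 - 4) ^ 2)
      = 16 * π ^ 2 / (n : ℝ) ^ 2 := by
  have hN : (5 : ℝ) ≤ (n : ℝ) := by exact_mod_cast hn
  have hn0 : (0 : ℝ) < (n : ℝ) := by linarith
  have hle : ∀ k : ℕ, π ^ 2 *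
      (Real.Gamma (((n : ℝ) + 2 * k) / 4) / Real.Gamma (((n : ℝ) + 2 * k + 4) / 4)) ^ 2 *
      (1 + 8 * k / ((n : ℝ) + 2 * k - 4) ^ 2) ≤ 16 * π ^ 2 / (n : ℝ) ^ 2 := by
    intro k
    rw [term_eq n k hn]
    exact term_le n k hn
  have h0 : π ^ 2 * (Real.Gamma (((n : ℝ) + 2 * 0) / 4) /
        Real.Gamma (((n : ℝ) + 2 * 0 + 4) / 4)) ^ 2 *
      (1 + 8 * 0 / ((n : ℝ) + 2 * 0 - 4) ^ 2) = 16 * π ^ 2 / (n : ℝ) ^ 2 := by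
    have h := term_eq n 0 hn
    simp only [Nat.cast_zero] at h
    rw [h]
    have hne : (n : ℝ) ≠ 0 := hn0.ne'
    field_simp
    ring
  refine ⟨le_antisymm (ciSup_le hle) ?_, h0⟩
  have hbdd : BddAbove (Set.range fun k : ℕ => π ^ 2 *
      (Real.Gamma (((n : ℝ) + 2 * k) / 4) / Real.Gamma (((n : ℝ) + 2 * k + 4) / 4)) ^ 2 *
      (1 + 8 * k / ((n : ℝ) + 2 * k - 4) ^ 2)) :=
    ⟨16 * π ^ 2 / (n : ℝ) ^ 2, by rintro x ⟨k, rfl⟩; exact hle k⟩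
  have h1 := le_ciSup hbdd 0
  simp only [Nat.cast_zero] at h1
  rw [← h0]
  exact h1
end

section
/- For n > 1 and 0 < α < n, the function ψ_α(t) = ∫_{S^{n-1}} ξ₁·(t + 1/t - 2ξ₁)^{-(n-α)/2} dξ (normalized surface measure, ξ₁ the first coordinate) is positive for all t > 0, t ≠ 1. -/
open MeasureTheory

/-- The map on the unit sphere induced by a linear isometry of the ambient space. -/
noncomputable def sphereRot {n : ℕ}
    (R : EuclideanSpace ℝ (Fin n) ≃ₗᵢ[ℝ] EuclideanSpace ℝ (Fin n))
    (ξ : Metric.sphere (0 : EuclideanSpace ℝ (Fin n)) 1) :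
    Metric.sphere (0 : EuclideanSpace ℝ (Fin n)) 1 :=
  ⟨R ξ, by
    have h := ξ.2
    simp only [mem_sphere_zero_iff_norm] at h ⊢
    simp [R.norm_map, h]⟩

/-- For `n > 1` and `0 < α < n`, the function
`ψ_α(t) = ∫_{S^{n-1}} ξ₁ (t + 1/t - 2ξ₁)^{-(n-α)/2} dξ` (with `dξ` the
rotation-invariant probability measure on `S^{n-1}`) is positive for every
`t > 0` with `t ≠ 1`. -/
theorem psi_alpha_pos (n : ℕ) (hn : 1 < n) (α : ℝ) (hα0 : 0 < α) (hαn : α < n)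
    (μ : Measure (Metric.sphere (0 : EuclideanSpace ℝ (Fin n)) 1))
    [IsProbabilityMeasure μ]
    (hμ : ∀ R : EuclideanSpace ℝ (Fin n) ≃ₗᵢ[ℝ] EuclideanSpace ℝ (Fin n),
      μ.map (sphereRot R) = μ)
    (t : ℝ) (ht : 0 < t) (ht1 : t ≠ 1) :
    0 < ∫ ξ : Metric.sphere (0 : EuclideanSpace ℝ (Fin n)) 1,
        (ξ : EuclideanSpace ℝ (Fin n)) ⟨0, by omega⟩ *
          (t + 1 / t - 2 * (ξ : EuclideanSpace ℝ (Fin n)) ⟨0, by omega⟩) ^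
            (-((n : ℝ) - α) / 2) ∂μ := by
  classical
  haveI : IsFiniteMeasureOnCompacts μ := ⟨fun _K _ => measure_lt_top μ _⟩
  set i0 : Fin n := ⟨0, by omega⟩ with hi0
  set q : ℝ := -((n : ℝ) - α) / 2 with hq
  have hq0 : q < 0 := by
    rw [hq]; have : (α : ℝ) < (n : ℝ) := hαn; linarith
  set c : ℝ := t + 1 / t with hc
  have hc2 : 2 < c := by
    have h1 : (0:ℝ) < (t - 1) ^ 2 := sq_pos_of_ne_zero (sub_ne_zero.mpr ht1)
    rw [hc, show t + 1 / t = 2 + (t - 1) ^ 2 / t by field_simp; ring]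
    have : 0 < (t - 1) ^ 2 / t := div_pos h1 ht
    linarith
  have hcoord : ∀ (ξ : Metric.sphere (0 : EuclideanSpace ℝ (Fin n)) 1) (i : Fin n),
      |(ξ : EuclideanSpace ℝ (Fin n)) i| ≤ 1 := by
    intro ξ i
    have h : ‖(ξ : EuclideanSpace ℝ (Fin n))‖ = 1 := by
      have := ξ.2; simpa [mem_sphere_zero_iff_norm] using this
    have h2 : (ξ : EuclideanSpace ℝ (Fin n)) i ^ 2 ≤ ∑ j, (ξ : EuclideanSpace ℝ (Fin n)) j ^ 2 :=
      Finset.single_le_sum (f := fun j => (ξ : EuclideanSpace ℝ (Fin n)) j ^ 2)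
        (fun j _ => sq_nonneg _) (Finset.mem_univ i)
    have h3 := Real.sqrt_le_sqrt h2
    rw [Real.sqrt_sq_eq_abs] at h3
    calc |(ξ : EuclideanSpace ℝ (Fin n)) i| ≤ √(∑ j, (ξ : EuclideanSpace ℝ (Fin n)) j ^ 2) := h3
      _ = 1 := by rw [EuclideanSpace.norm_eq] at h; simpa [sq_abs] using h
  have hpos : ∀ ξ : Metric.sphere (0 : EuclideanSpace ℝ (Fin n)) 1,
      0 < c - 2 * (ξ : EuclideanSpace ℝ (Fin n)) i0 := by
    intro ξ; have := (abs_le.mp (hcoord ξ i0)).2; linarith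
  have hpos' : ∀ ξ : Metric.sphere (0 : EuclideanSpace ℝ (Fin n)) 1,
      0 < c + 2 * (ξ : EuclideanSpace ℝ (Fin n)) i0 := by
    intro ξ; have := (abs_le.mp (hcoord ξ i0)).1; linarith
  set g : Metric.sphere (0 : EuclideanSpace ℝ (Fin n)) 1 → ℝ :=
    fun ξ => (ξ : EuclideanSpace ℝ (Fin n)) i0
      * (c - 2 * (ξ : EuclideanSpace ℝ (Fin n)) i0) ^ q with hg
  have hcont1 : Continuous (fun ξ : Metric.sphere (0 : EuclideanSpace ℝ (Fin n)) 1 =>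
      (ξ : EuclideanSpace ℝ (Fin n)) i0) :=
    (EuclideanSpace.proj i0).continuous.comp continuous_subtype_val
  have hcontg : Continuous g := by
    apply hcont1.mul
    exact (continuous_const.sub (continuous_const.mul hcont1)).rpow_const
      (fun ξ => Or.inl (hpos ξ).ne')
  have hintg : Integrable g μ :=
    hcontg.integrable_of_hasCompactSupport (HasCompactSupport.of_compactSpace g)
  set N : EuclideanSpace ℝ (Fin n) ≃ₗᵢ[ℝ] EuclideanSpace ℝ (Fin n) :=
    LinearIsometryEquiv.neg ℝ with hN
  have hNcont : Continuous (sphereRot N) :=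
    Continuous.subtype_mk (N.continuous.comp continuous_subtype_val) _
  have hgneg : ∀ ξ : Metric.sphere (0 : EuclideanSpace ℝ (Fin n)) 1,
      g (sphereRot N ξ) = -((ξ : EuclideanSpace ℝ (Fin n)) i0)
        * (c + 2 * (ξ : EuclideanSpace ℝ (Fin n)) i0) ^ q := by
    intro ξ
    have h1 : ((sphereRot N ξ :
        Metric.sphere (0 : EuclideanSpace ℝ (Fin n)) 1) : EuclideanSpace ℝ (Fin n)) i0
        = -((ξ : EuclideanSpace ℝ (Fin n)) i0) := by
      simp [sphereRot, hN, LinearIsometryEquiv.coe_neg]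
    rw [hg]
    simp only [h1]
    ring_nf
  have hmap : ∫ ξ, g ξ ∂μ = ∫ ξ, g (sphereRot N ξ) ∂μ := by
    conv_lhs => rw [← hμ N]
    rw [integral_map hNcont.aemeasurable hcontg.aestronglyMeasurable]
  have hintg2 : Integrable (fun ξ => g (sphereRot N ξ)) μ :=
    (hcontg.comp hNcont).integrable_of_hasCompactSupport
      (HasCompactSupport.of_compactSpace _)
  set h : Metric.sphere (0 : EuclideanSpace ℝ (Fin n)) 1 → ℝ := fun ξ =>
    (ξ : EuclideanSpace ℝ (Fin n)) i0 *
      ((c - 2 * (ξ : EuclideanSpace ℝ (Fin n)) i0) ^ q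
        - (c + 2 * (ξ : EuclideanSpace ℝ (Fin n)) i0) ^ q) with hh
  have hheq : ∀ ξ, h ξ = g ξ + g (sphereRot N ξ) := by
    intro ξ; rw [hgneg ξ, hh, hg]; ring
  have hhnonneg : ∀ ξ, 0 ≤ h ξ := by
    intro ξ
    rw [show h ξ = (ξ : EuclideanSpace ℝ (Fin n)) i0 *
      ((c - 2 * (ξ : EuclideanSpace ℝ (Fin n)) i0) ^ q
        - (c + 2 * (ξ : EuclideanSpace ℝ (Fin n)) i0) ^ q) from rfl]
    rcases le_or_gt 0 ((ξ : EuclideanSpace ℝ (Fin n)) i0) with h0 | h0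
    · have := Real.rpow_le_rpow_of_nonpos (hpos ξ) (by linarith :
        c - 2 * (ξ : EuclideanSpace ℝ (Fin n)) i0 ≤ c + 2 * (ξ : EuclideanSpace ℝ (Fin n)) i0)
        hq0.le
      exact mul_nonneg h0 (by linarith)
    · have := Real.rpow_le_rpow_of_nonpos (hpos' ξ) (by linarith :
        c + 2 * (ξ : EuclideanSpace ℝ (Fin n)) i0 ≤ c - 2 * (ξ : EuclideanSpace ℝ (Fin n)) i0)
        hq0.le
      nlinarith
  have hhpos : ∀ ξ : Metric.sphere (0 : EuclideanSpace ℝ (Fin n)) 1,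
      (ξ : EuclideanSpace ℝ (Fin n)) i0 ≠ 0 → 0 < h ξ := by
    intro ξ hne
    rw [show h ξ = (ξ : EuclideanSpace ℝ (Fin n)) i0 *
      ((c - 2 * (ξ : EuclideanSpace ℝ (Fin n)) i0) ^ q
        - (c + 2 * (ξ : EuclideanSpace ℝ (Fin n)) i0) ^ q) from rfl]
    rcases lt_or_gt_of_ne hne with h0 | h0
    · have := Real.rpow_lt_rpow_of_neg (hpos' ξ) (by linarith :
        c + 2 * (ξ : EuclideanSpace ℝ (Fin n)) i0 < c - 2 * (ξ : EuclideanSpace ℝ (Fin n)) i0)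
        hq0
      exact mul_pos_of_neg_of_neg h0 (by linarith)
    · have := Real.rpow_lt_rpow_of_neg (hpos ξ) (by linarith :
        c - 2 * (ξ : EuclideanSpace ℝ (Fin n)) i0 < c + 2 * (ξ : EuclideanSpace ℝ (Fin n)) i0)
        hq0
      exact mul_pos h0 (by linarith)
  have hinth : Integrable h μ := by
    have heq : h = fun ξ => g ξ + g (sphereRot N ξ) := funext hheq
    rw [heq]; exact hintg.add hintg2
  have hμpos : 0 < μ {ξ : Metric.sphere (0 : EuclideanSpace ℝ (Fin n)) 1 |
      (ξ : EuclideanSpace ℝ (Fin n)) i0 ≠ 0} := by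
    by_contra hcon
    push_neg at hcon
    have hzero : μ {ξ : Metric.sphere (0 : EuclideanSpace ℝ (Fin n)) 1 |
        (ξ : EuclideanSpace ℝ (Fin n)) i0 ≠ 0} = 0 := le_antisymm hcon zero_le
    have hmeasi : ∀ i : Fin n, MeasurableSet {ξ : Metric.sphere (0 : EuclideanSpace ℝ (Fin n)) 1 |
        (ξ : EuclideanSpace ℝ (Fin n)) i ≠ 0} := by
      intro i
      have hci : Continuous (fun ξ : Metric.sphere (0 : EuclideanSpace ℝ (Fin n)) 1 =>
          (ξ : EuclideanSpace ℝ (Fin n)) i) :=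
        (EuclideanSpace.proj i).continuous.comp continuous_subtype_val
      exact (isOpen_compl_iff.mpr (isClosed_eq hci continuous_const)).measurableSet
    have hi : ∀ i : Fin n, μ {ξ : Metric.sphere (0 : EuclideanSpace ℝ (Fin n)) 1 |
        (ξ : EuclideanSpace ℝ (Fin n)) i ≠ 0} = 0 := by
      intro i
      set R : EuclideanSpace ℝ (Fin n) ≃ₗᵢ[ℝ] EuclideanSpace ℝ (Fin n) :=
        LinearIsometryEquiv.piLpCongrLeft 2 ℝ ℝ (Equiv.swap i0 i) with hR
      have hRcont : Continuous (sphereRot R) :=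
        Continuous.subtype_mk (R.continuous.comp continuous_subtype_val) _
      have hpre : sphereRot R ⁻¹' {ξ : Metric.sphere (0 : EuclideanSpace ℝ (Fin n)) 1 |
          (ξ : EuclideanSpace ℝ (Fin n)) i0 ≠ 0}
          = {ξ : Metric.sphere (0 : EuclideanSpace ℝ (Fin n)) 1 |
            (ξ : EuclideanSpace ℝ (Fin n)) i ≠ 0} := by
        ext ξ
        have h1 : ((sphereRot R ξ :
            Metric.sphere (0 : EuclideanSpace ℝ (Fin n)) 1) : EuclideanSpace ℝ (Fin n)) i0
            = (ξ : EuclideanSpace ℝ (Fin n)) i := by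
          simp only [sphereRot, hR, LinearIsometryEquiv.piLpCongrLeft_apply,
            Equiv.piCongrLeft'_apply]
          rw [Equiv.symm_swap, Equiv.swap_apply_left]
        simp [Set.mem_preimage, h1]
      have := Measure.map_apply (μ := μ) hRcont.measurable (hmeasi i0)
      rw [hμ R, hpre] at this
      rw [← this, hzero]
    have hunion : μ (⋃ i : Fin n, {ξ : Metric.sphere (0 : EuclideanSpace ℝ (Fin n)) 1 |
        (ξ : EuclideanSpace ℝ (Fin n)) i ≠ 0}) = 0 := measure_iUnion_null hi
    have huniv : (⋃ i : Fin n, {ξ : Metric.sphere (0 : EuclideanSpace ℝ (Fin n)) 1 |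
        (ξ : EuclideanSpace ℝ (Fin n)) i ≠ 0}) = Set.univ := by
      ext ξ
      simp only [Set.mem_iUnion, Set.mem_setOf_eq, Set.mem_univ, iff_true]
      by_contra hall
      push_neg at hall
      have hx0 : (ξ : EuclideanSpace ℝ (Fin n)) = 0 := PiLp.ext (fun i => by simpa using hall i)
      have hnrm : ‖(ξ : EuclideanSpace ℝ (Fin n))‖ = 1 := by
        have := ξ.2; simpa [mem_sphere_zero_iff_norm] using this
      rw [hx0] at hnrm
      simp at hnrm
    rw [huniv, measure_univ] at hunion
    exact one_ne_zero hunion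
  have hsupp : {ξ : Metric.sphere (0 : EuclideanSpace ℝ (Fin n)) 1 |
      (ξ : EuclideanSpace ℝ (Fin n)) i0 ≠ 0} ⊆ Function.support h :=
    fun ξ hξ => (hhpos ξ hξ).ne'
  have hμsupp : 0 < μ (Function.support h) := lt_of_lt_of_le hμpos (measure_mono hsupp)
  have hIh : 0 < ∫ ξ, h ξ ∂μ :=
    (integral_pos_iff_support_of_nonneg hhnonneg hinth).mpr hμsupp
  have hsum : ∫ ξ, h ξ ∂μ = 2 * ∫ ξ, g ξ ∂μ := by
    calc ∫ ξ, h ξ ∂μ = ∫ ξ, (g ξ + g (sphereRot N ξ)) ∂μ := by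
          congr 1; exact funext hheq
      _ = (∫ ξ, g ξ ∂μ) + ∫ ξ, g (sphereRot N ξ) ∂μ := integral_add hintg hintg2
      _ = 2 * ∫ ξ, g ξ ∂μ := by rw [← hmap]; ring
  rw [hsum] at hIh
  have hfin : 0 < ∫ ξ, g ξ ∂μ := by linarith
  exact hfin
end
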